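/- If a positive definite density matrix ρ on H_A ⊗ H_B ⊗ H_C satisfies the quantum Markov chain operator identity K_AB(ρ) + K_BC(ρ) − K_B(ρ) − K_ABC(ρ) = 0 (with implicit identity extensions), then its modular commutator vanishes: J(A,B,C)_ρ = 0. -/

import Mathlib

open scoped ComplexOrder

noncomputable section

namespace ModularCommutator

open Matrix Complex

/-- Matrix logarithm of a Hermitian matrix, defined through the spectral theorem
(junk value `0` on non-Hermitian matrices). -/
noncomputable def mlog {n : Type} [Fintype n] [DecidableEq n] (M : Matrix n n ℂ) :
    Matrix n n ℂ :=
  if h : M.IsHermitian then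
    (h.eigenvectorUnitary : Matrix n n ℂ) *
      Matrix.diagonal (fun i => (Real.log (h.eigenvalues i) : ℂ)) *
      (star (h.eigenvectorUnitary : Matrix n n ℂ))
  else 0

/-- A Hermitian matrix commutes with its `mlog`. -/
lemma mlog_comm {n : Type} [Fintype n] [DecidableEq n] {M : Matrix n n ℂ}
    (h : M.IsHermitian) : M * mlog M = mlog M * M := by
  rw [mlog, dif_pos h]
  set U : Matrix n n ℂ := (h.eigenvectorUnitary : Matrix n n ℂ) with hUdef
  have hU : star U * U = 1 := (Unitary.mem_iff.mp h.eigenvectorUnitary.2).1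
  have key : ∀ (d e : n → ℂ),
      (U * diagonal d * star U) * (U * diagonal e * star U)
        = U * diagonal (fun i => d i * e i) * star U := by
    intro d e
    have hmid : diagonal d * (star U * U) * diagonal e = diagonal (fun i => d i * e i) := by
      rw [hU, mul_one, diagonal_mul_diagonal]
    calc (U * diagonal d * star U) * (U * diagonal e * star U)
        = U * (diagonal d * (star U * U) * diagonal e) * star U := by
          simp only [Matrix.mul_assoc]
      _ = U * diagonal (fun i => d i * e i) * star U := by rw [hmid]
  conv_lhs => lhs; rw [h.spectral_theorem]
  conv_rhs => rhs; rw [h.spectral_theorem]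
  simp only [Unitary.conjStarAlgAut_apply, Unitary.coe_star]
  rw [← hUdef, key, key]
  have hfun : (fun i => (RCLike.ofReal ∘ h.eigenvalues) i * (Real.log (h.eigenvalues i) : ℂ))
      = (fun i => (Real.log (h.eigenvalues i) : ℂ) * (RCLike.ofReal ∘ h.eigenvalues) i) := by
    funext i; exact mul_comm _ _
  rw [hfun]

variable {A B C : Type} [Fintype A] [DecidableEq A] [Fintype B] [DecidableEq B]
  [Fintype C] [DecidableEq C]

/-- Partial trace onto the factors `A ⊗ B`. -/
def ptAB (ρ : Matrix (A × B × C) (A × B × C) ℂ) : Matrix (A × B) (A × B) ℂ :=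
  fun p q => ∑ c : C, ρ (p.1, p.2, c) (q.1, q.2, c)

/-- Partial trace onto the factors `B ⊗ C`. -/
def ptBC (ρ : Matrix (A × B × C) (A × B × C) ℂ) : Matrix (B × C) (B × C) ℂ :=
  fun p q => ∑ a : A, ρ (a, p.1, p.2) (a, q.1, q.2)

/-- Partial trace onto the factors `A ⊗ C`. -/
def ptAC (ρ : Matrix (A × B × C) (A × B × C) ℂ) : Matrix (A × C) (A × C) ℂ :=
  fun p q => ∑ b : B, ρ (p.1, b, p.2) (q.1, b, q.2)

/-- Partial trace onto the factor `A`. -/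
def ptA (ρ : Matrix (A × B × C) (A × B × C) ℂ) : Matrix A A ℂ :=
  fun a a' => ∑ b : B, ∑ c : C, ρ (a, b, c) (a', b, c)

/-- Partial trace onto the factor `B`. -/
def ptB (ρ : Matrix (A × B × C) (A × B × C) ℂ) : Matrix B B ℂ :=
  fun b b' => ∑ a : A, ∑ c : C, ρ (a, b, c) (a, b', c)

/-- Partial trace onto the factor `C`. -/
def ptC (ρ : Matrix (A × B × C) (A × B × C) ℂ) : Matrix C C ℂ :=
  fun c c' => ∑ a : A, ∑ b : B, ρ (a, b, c) (a, b, c')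

/-- Extension of an operator on `A ⊗ B` by the identity on `C`. -/
def embAB (M : Matrix (A × B) (A × B) ℂ) : Matrix (A × B × C) (A × B × C) ℂ :=
  fun x y => if x.2.2 = y.2.2 then M (x.1, x.2.1) (y.1, y.2.1) else 0

/-- Extension of an operator on `B ⊗ C` by the identity on `A`. -/
def embBC (M : Matrix (B × C) (B × C) ℂ) : Matrix (A × B × C) (A × B × C) ℂ :=
  fun x y => if x.1 = y.1 then M x.2 y.2 else 0

/-- Extension of an operator on `B` by the identity on `A ⊗ C`. -/
def embB (M : Matrix B B ℂ) : Matrix (A × B × C) (A × B × C) ℂ :=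
  fun x y => if x.1 = y.1 ∧ x.2.2 = y.2.2 then M x.2.1 y.2.1 else 0

/-- The modular Hamiltonian `K_{AB}(ρ) = −ln ρ_{AB}`, extended by the identity on `C`. -/
def KAB (ρ : Matrix (A × B × C) (A × B × C) ℂ) : Matrix (A × B × C) (A × B × C) ℂ :=
  embAB (-(mlog (ptAB ρ)))

/-- The modular Hamiltonian `K_{BC}(ρ) = −ln ρ_{BC}`, extended by the identity on `A`. -/
def KBC (ρ : Matrix (A × B × C) (A × B × C) ℂ) : Matrix (A × B × C) (A × B × C) ℂ :=
  embBC (-(mlog (ptBC ρ)))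

/-- The modular commutator `J(A,B,C)_ρ = i · Tr(ρ [K_{AB}(ρ), K_{BC}(ρ)])`. -/
def Jmod (ρ : Matrix (A × B × C) (A × B × C) ℂ) : ℂ :=
  Complex.I * (ρ * (KAB ρ * KBC ρ - KBC ρ * KAB ρ)).trace

/-- `embB M` equals `embBC` of `M ⊗ 1`. -/
lemma embB_eq_embBC (M : Matrix B B ℂ) :
    (embB M : Matrix (A × B × C) (A × B × C) ℂ)
      = embBC (fun p q => if p.2 = q.2 then M p.1 q.1 else 0) := by
  ext ⟨a, b, c⟩ ⟨a', b', c'⟩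
  simp only [embB, embBC]
  by_cases h1 : a = a' <;> by_cases h2 : c = c' <;> simp [h1, h2]

/-- `embBC` is multiplicative. -/
lemma embBC_mul (P Q : Matrix (B × C) (B × C) ℂ) :
    (embBC P : Matrix (A × B × C) (A × B × C) ℂ) * embBC Q = embBC (P * Q) := by
  ext ⟨a, p⟩ ⟨a', q⟩
  simp only [embBC, Matrix.mul_apply, Fintype.sum_prod_type]
  by_cases h : a = a'
  · subst h
    simp
  · rw [if_neg h]
    apply Finset.sum_eq_zero; intro a'' _
    apply Finset.sum_eq_zero; intro p' _
    by_cases h1 : a = a'' <;> by_cases h2 : a'' = a' <;> simp_all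

/-- Trace against an embedded `BC`-operator computes via the partial trace. -/
lemma trace_mul_embBC (ρ : Matrix (A × B × C) (A × B × C) ℂ)
    (P : Matrix (B × C) (B × C) ℂ) :
    (ρ * embBC P).trace = (ptBC ρ * P).trace := by
  simp only [Matrix.trace, Matrix.diag, Matrix.mul_apply, embBC, ptBC,
    Fintype.sum_prod_type, Finset.sum_mul]
  rw [Finset.sum_comm]
  congr 1; ext p
  rw [Finset.sum_comm]
  congr 1; ext q
  simp [Finset.sum_comm (γ := A)]

/-- Cyclic/commuting trace trick: if `σ` commutes with `N`, then
`Tr (σ P N) = Tr (σ N P)`. -/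
lemma trace_comm_trick {n : Type} [Fintype n] [DecidableEq n]
    (σ P N : Matrix n n ℂ) (h : σ * N = N * σ) :
    (σ * (P * N)).trace = (σ * (N * P)).trace := by
  calc (σ * (P * N)).trace = (N * (σ * P)).trace := by
        rw [← Matrix.mul_assoc, Matrix.trace_mul_cycle, Matrix.mul_assoc]
    _ = (σ * (N * P)).trace := by rw [← Matrix.mul_assoc, ← h, Matrix.mul_assoc]

lemma ptBC_isHermitian {ρ : Matrix (A × B × C) (A × B × C) ℂ}
    (h : ρ.IsHermitian) : (ptBC ρ).IsHermitian := by
  ext ⟨b, c⟩ ⟨b', c'⟩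
  simp only [Matrix.conjTranspose_apply, ptBC, star_sum]
  congr 1; ext a
  exact congrFun (congrFun h (a, b, c)) (a, b', c')

/-- If a positive definite density matrix `ρ` on `H_A ⊗ H_B ⊗ H_C`
satisfies the quantum Markov chain operator identity
`K_AB(ρ) + K_BC(ρ) − K_B(ρ) − K_ABC(ρ) = 0` (with implicit identity extensions),
then its modular commutator vanishes: `J(A,B,C)_ρ = 0`. -/
theorem modular_commutator_markov
    (ρ : Matrix (A × B × C) (A × B × C) ℂ) (hρ : ρ.PosDef) (hTr : ρ.trace = 1)
    (hMarkov : KAB ρ + KBC ρ - embB (-(mlog (ptB ρ))) - (-(mlog ρ)) = 0) :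
    Jmod ρ = 0 := by
  set E : Matrix (A × B × C) (A × B × C) ℂ := embB (-(mlog (ptB ρ))) with hE
  set L : Matrix (A × B × C) (A × B × C) ℂ := -(mlog ρ) with hL
  set D : Matrix (A × B × C) (A × B × C) ℂ := KBC ρ with hD
  have hK : KAB ρ = E + L - D := by
    have : KAB ρ - (E + L - D) = 0 := by rw [← hMarkov]; abel
    exact sub_eq_zero.mp this
  have hcommL : ρ * L = L * ρ := by
    simp only [hL, Matrix.mul_neg, Matrix.neg_mul, mlog_comm hρ.isHermitian]
  -- The L-part of the trace vanishes
  have hLtr : (ρ * (L * D)).trace = (ρ * (D * L)).trace :=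
    (trace_comm_trick ρ D L hcommL).symm
  -- The E-part of the trace vanishes
  have hEtr : (ρ * (E * D)).trace = (ρ * (D * E)).trace := by
    set σ := ptBC ρ with hσ
    have hσH : σ.IsHermitian := ptBC_isHermitian hρ.isHermitian
    set N : Matrix (B × C) (B × C) ℂ := -(mlog σ) with hN
    set P : Matrix (B × C) (B × C) ℂ :=
      (fun p q => if p.2 = q.2 then (-(mlog (ptB ρ))) p.1 q.1 else 0) with hP
    have hEP : E = embBC P := embB_eq_embBC _
    have hDN : D = embBC N := rfl
    have hcommN : σ * N = N * σ := by
      simp only [hN, Matrix.mul_neg, Matrix.neg_mul, mlog_comm hσH]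
    calc (ρ * (E * D)).trace = (σ * (P * N)).trace := by
          rw [hEP, hDN, embBC_mul, trace_mul_embBC, ← hσ]
      _ = (σ * (N * P)).trace := trace_comm_trick σ P N hcommN
      _ = (ρ * (D * E)).trace := by
          rw [hEP, hDN, embBC_mul, trace_mul_embBC, ← hσ]
  -- Put it together
  have expand : ρ * (KAB ρ * D - D * KAB ρ)
      = ρ * (E * D) - ρ * (D * E) + (ρ * (L * D) - ρ * (D * L)) := by
    rw [hK]
    noncomm_ring
  simp only [Jmod, ← hD, expand]
  rw [Matrix.trace_add, Matrix.trace_sub, Matrix.trace_sub, hLtr, hEtr]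
  ring

end ModularCommutator
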